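/- arXiv:2109.10067 — 2 statements merged into one kernel-verified Lean document; each statement's English description precedes it below -/
import Mathlib

section
/- For every γ ∈ [π/2, π], every α ≥ 1, and every ε > 0, there exist an instance (X, f) of a biobjective minimization problem and a subset X' ⊆ X such that X' is an α-approximation with respect to ≤_γ^φ for every φ ∈ [0, γ − π/2] \ {γ − π, π/2}, but X' is not an (α·(1 + tan(γ/2 − π/4)) − ε)-approximation with respect to the componentwise order ≤. -/
open Real Set Pointwise

noncomputable section

/-- The linear map `T_γ^φ : ℝ² → ℝ²` from the paper, with `φ' = γ - π/2 - φ`. -/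
def Tmap (γ φ : ℝ) (y : ℝ × ℝ) : ℝ × ℝ :=
  (Real.cos (γ - Real.pi/2 - φ) * y.1 + Real.sin (γ - Real.pi/2 - φ) * y.2,
   Real.sin φ * y.1 + Real.cos φ * y.2)

/-- The ordering cone `C_γ^φ = {y : T_γ^φ(y) ≥ 0 componentwise}`. -/
def coneC (γ φ : ℝ) : Set (ℝ × ℝ) :=
  {y : ℝ × ℝ | 0 ≤ (Tmap γ φ y).1 ∧ 0 ≤ (Tmap γ φ y).2}

/-- The relation `y ≤_γ^φ y' ⇔ y' - y ∈ C_γ^φ`. -/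
def leC (γ φ : ℝ) (y y' : ℝ × ℝ) : Prop :=
  y' - y ∈ coneC γ φ

/-- The set of admissible rotation angles `φ ∈ [0, γ - π/2] \ {γ - π, π/2}`. -/
def PhiDomain (γ : ℝ) : Set ℝ :=
  Set.Icc 0 (γ - Real.pi/2) \ {γ - Real.pi, Real.pi/2}

/-- `x` is optimal with respect to `≤_γ^φ` (minimization). -/
def OptimalWrt (γ φ : ℝ) {X : Type} (f : X → ℝ × ℝ) (x : X) : Prop :=
  ¬ ∃ x', f x' ≠ f x ∧ leC γ φ (f x') (f x)

/-- `x` is `γ`-supported (minimization). -/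
def GammaSupported (γ : ℝ) {X : Type} (f : X → ℝ × ℝ) (x : X) : Prop :=
  ∃ φ ∈ PhiDomain γ, OptimalWrt γ φ f x

/-- `x` is efficient (minimization, componentwise order). -/
def Efficient {X : Type} (f : X → ℝ × ℝ) (x : X) : Prop :=
  ¬ ∃ x', f x' ≠ f x ∧ (f x').1 ≤ (f x).1 ∧ (f x').2 ≤ (f x).2

/-- `S` is an `α`-approximation with respect to the componentwise order (minimization). -/
def IsApprox (α : ℝ) {X : Type} (f : X → ℝ × ℝ) (S : Set X) : Prop :=
  ∀ x : X, ∃ x' ∈ S, (f x').1 ≤ α * (f x).1 ∧ (f x').2 ≤ α * (f x).2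

/-- `x` is `α`-approximate for the weighted max-ordering scalarization of `I_γ^φ`
with weights `w₁, w₂`. -/
def MaxOrdApprox (α w₁ w₂ γ φ : ℝ) {X : Type} (f : X → ℝ × ℝ) (x : X) : Prop :=
  ∀ x'' : X, max (w₁ * (Tmap γ φ (f x)).1) (w₂ * (Tmap γ φ (f x)).2) ≤
    α * max (w₁ * (Tmap γ φ (f x'')).1) (w₂ * (Tmap γ φ (f x'')).2)

/-- The weight `w₁ = √(sin φ)/√(cos φ') + √(cos φ)/√(sin φ')`. -/
def wOne (γ φ : ℝ) : ℝ :=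
  Real.sqrt (Real.sin φ) / Real.sqrt (Real.cos (γ - Real.pi/2 - φ)) +
  Real.sqrt (Real.cos φ) / Real.sqrt (Real.sin (γ - Real.pi/2 - φ))

/-- The weight `w₂ = √(sin φ')/√(cos φ) + √(cos φ')/√(sin φ)`. -/
def wTwo (γ φ : ℝ) : ℝ :=
  Real.sqrt (Real.sin (γ - Real.pi/2 - φ)) / Real.sqrt (Real.cos φ) +
  Real.sqrt (Real.cos (γ - Real.pi/2 - φ)) / Real.sqrt (Real.sin φ)

/-- `x` is optimal with respect to `≤_γ^φ` (maximization). -/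
def OptimalWrtMax (γ φ : ℝ) {X : Type} (f : X → ℝ × ℝ) (x : X) : Prop :=
  ¬ ∃ x', f x' ≠ f x ∧ leC γ φ (f x) (f x')

/-- `x` is `γ`-supported (maximization). -/
def GammaSupportedMax (γ : ℝ) {X : Type} (f : X → ℝ × ℝ) (x : X) : Prop :=
  ∃ φ ∈ PhiDomain γ, OptimalWrtMax γ φ f x

/-- `S` is an `α`-approximation with respect to the componentwise order (maximization). -/
def IsApproxMax (α : ℝ) {X : Type} (f : X → ℝ × ℝ) (S : Set X) : Prop :=
  ∀ x : X, ∃ x' ∈ S, (f x).1 ≤ α * (f x').1 ∧ (f x).2 ≤ α * (f x').2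

/-- Auxiliary: the "slope" used in the tight example. -/
def mVal (γ φ : ℝ) : ℝ :=
  max (Real.tan (γ/2 - Real.pi/4)) (max (Real.tan φ) (Real.tan (γ - Real.pi/2 - φ)))

/-- Auxiliary: the small offset. -/
def sVal (α ε m : ℝ) : ℝ := min α (ε / (2 * (1 + m)))

/-- Auxiliary: the family of covering points. -/
def gPt (γ α ε φ : ℝ) : ℝ × ℝ :=
  if γ - Real.pi/2 ≤ 2 * φ
  then (sVal α ε (mVal γ φ), α + (α - sVal α ε (mVal γ φ)) * mVal γ φ)
  else (α + (α - sVal α ε (mVal γ φ)) * mVal γ φ, sVal α ε (mVal γ φ))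

/-- Auxiliary: the objective function of the tight instance. -/
def Ffun (γ α ε : ℝ) : Option ℝ → ℝ × ℝ
  | none => (1, 1)
  | some φ => gPt γ α ε φ

lemma tan_mono_aux {a b : ℝ} (ha : 0 ≤ a) (hab : a ≤ b) (hb : b < Real.pi/2) :
    Real.tan a ≤ Real.tan b := by
  have hpi : (0:ℝ) < Real.pi/2 := by positivity
  exact Real.strictMonoOn_tan.monotoneOn
    ⟨by linarith, by linarith⟩ ⟨by linarith, hb⟩ hab

lemma mVal_nonneg {γ : ℝ} (hγ : γ ∈ Set.Icc (Real.pi/2) Real.pi) (φ : ℝ) :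
    0 ≤ mVal γ φ := by
  obtain ⟨h1, h2⟩ := hγ
  have hpi := Real.pi_pos
  have h0 : 0 ≤ Real.tan (γ/2 - Real.pi/4) :=
    Real.tan_nonneg_of_nonneg_of_le_pi_div_two (by linarith) (by linarith)
  exact le_trans h0 (le_max_left _ _)

lemma sVal_pos {α ε m : ℝ} (hα : 1 ≤ α) (hε : 0 < ε) (hm : 0 ≤ m) :
    0 < sVal α ε m := by
  have : (0:ℝ) < 2 * (1 + m) := by linarith
  exact lt_min (by linarith) (by positivity)

lemma sVal_le {α ε m : ℝ} : sVal α ε m ≤ α := min_le_left _ _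

lemma sVal_bound {α ε m : ℝ} (hα : 1 ≤ α) (hε : 0 < ε) (hm : 0 ≤ m) :
    sVal α ε m * (1 + m) ≤ ε / 2 := by
  have hd : (0:ℝ) < 2 * (1 + m) := by linarith
  have h1 : sVal α ε m ≤ ε / (2 * (1 + m)) := min_le_right _ _
  have h2 : ε / (2 * (1 + m)) * (1 + m) = ε / 2 := by field_simp
  calc sVal α ε m * (1 + m) ≤ ε / (2 * (1 + m)) * (1 + m) := by
        apply mul_le_mul_of_nonneg_right h1 (by linarith)
    _ = ε / 2 := h2

lemma gPt_pos {γ α ε : ℝ} (hγ : γ ∈ Set.Icc (Real.pi/2) Real.pi)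
    (hα : 1 ≤ α) (hε : 0 < ε) (φ : ℝ) :
    0 < (gPt γ α ε φ).1 ∧ 0 < (gPt γ α ε φ).2 := by
  have hm := mVal_nonneg hγ φ
  have hs := sVal_pos hα hε hm
  have hsle : sVal α ε (mVal γ φ) ≤ α := sVal_le
  have hbig : 0 < α + (α - sVal α ε (mVal γ φ)) * mVal γ φ := by nlinarith
  unfold gPt
  split <;> exact ⟨by simpa, by simpa⟩

lemma gPt_big {γ α ε : ℝ} (hγ : γ ∈ Set.Icc (Real.pi/2) Real.pi)
    (hα : 1 ≤ α) (hε : 0 < ε) (φ : ℝ) :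
    α * (1 + Real.tan (γ/2 - Real.pi/4)) - ε < (gPt γ α ε φ).1 ∨
    α * (1 + Real.tan (γ/2 - Real.pi/4)) - ε < (gPt γ α ε φ).2 := by
  set β := Real.tan (γ/2 - Real.pi/4) with hβ
  obtain ⟨h1, h2⟩ := hγ
  have hpi := Real.pi_pos
  have hβ0 : 0 ≤ β :=
    Real.tan_nonneg_of_nonneg_of_le_pi_div_two (by linarith) (by linarith)
  have hm := mVal_nonneg ⟨h1, h2⟩ φ
  have hβm : β ≤ mVal γ φ := le_max_left _ _
  have hs := sVal_pos hα hε hm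
  have hsle : sVal α ε (mVal γ φ) ≤ α := sVal_le
  have hsb := sVal_bound (m := mVal γ φ) hα hε hm
  have key : α * (1 + β) - ε < α + (α - sVal α ε (mVal γ φ)) * mVal γ φ := by
    nlinarith [mul_nonneg (le_of_lt hs) hβ0, mul_nonneg (sub_nonneg.mpr hsle) hm]
  unfold gPt
  split
  · right; simpa using key
  · left; simpa using key

/-- Any componentwise-nonnegative vector lies in the cone, for admissible angles. -/
lemma mem_coneC_of_nonneg {γ φ : ℝ} (hsφ : 0 ≤ Real.sin φ) (hcφ : 0 ≤ Real.cos φ)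
    (hsφ' : 0 ≤ Real.sin (γ - Real.pi/2 - φ)) (hcφ' : 0 ≤ Real.cos (γ - Real.pi/2 - φ))
    {y : ℝ × ℝ} (h1 : 0 ≤ y.1) (h2 : 0 ≤ y.2) : y ∈ coneC γ φ := by
  constructor
  · exact add_nonneg (mul_nonneg hcφ' h1) (mul_nonneg hsφ' h2)
  · exact add_nonneg (mul_nonneg hsφ h1) (mul_nonneg hcφ h2)

/-- tightness: there is an instance and a subset `X'` that is an
`α`-approximation with respect to `≤_γ^φ` for every admissible `φ`, but not an
`(α·(1 + tan(γ/2 - π/4)) - ε)`-approximation with respect to `≤`. -/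
theorem stmt_18 (γ α ε : ℝ) (hγ : γ ∈ Set.Icc (Real.pi/2) Real.pi)
    (hα : 1 ≤ α) (hε : 0 < ε) :
    ∃ (X : Type) (f : X → ℝ × ℝ) (X' : Set X), Nonempty X ∧
      (∀ x, 0 < (f x).1 ∧ 0 < (f x).2) ∧
      (∀ φ ∈ PhiDomain γ, ∀ x : X, ∃ x' ∈ X', leC γ φ (f x') (α • f x)) ∧
      ¬ IsApprox (α * (1 + Real.tan (γ/2 - Real.pi/4)) - ε) f X' := by
  obtain ⟨hγ1, hγ2⟩ := hγ
  have hpi := Real.pi_pos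
  refine ⟨Option ℝ, Ffun γ α ε, Set.range some, ⟨none⟩, ?_, ?_, ?_⟩
  · rintro (_ | φ)
    · exact ⟨one_pos, one_pos⟩
    · exact gPt_pos ⟨hγ1, hγ2⟩ hα hε φ
  · rintro φ ⟨⟨hφ0, hφ1⟩, hφex⟩ x
    simp only [Set.mem_singleton_iff, Set.mem_insert_iff, not_or] at hφex
    obtain ⟨hne1, hne2⟩ : φ ≠ γ - Real.pi ∧ φ ≠ Real.pi/2 := hφex
    set φ' := γ - Real.pi/2 - φ with hφ'def
    have hφlt : φ < Real.pi/2 := lt_of_le_of_ne (by linarith) hne2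
    have hφ'0 : 0 ≤ φ' := by simp only [hφ'def]; linarith
    have hφ'lt : φ' < Real.pi/2 := by
      rcases lt_or_eq_of_le (show φ' ≤ Real.pi/2 by simp only [hφ'def]; linarith) with h | h
      · exact h
      · exact absurd (by simp only [hφ'def] at h; linarith : φ = γ - Real.pi) hne1
    have hsφ : 0 ≤ Real.sin φ := Real.sin_nonneg_of_nonneg_of_le_pi hφ0 (by linarith)
    have hcφ : 0 < Real.cos φ := Real.cos_pos_of_mem_Ioo ⟨by linarith, hφlt⟩
    have hsφ' : 0 ≤ Real.sin φ' := Real.sin_nonneg_of_nonneg_of_le_pi hφ'0 (by simp only [hφ'def]; linarith)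
    have hcφ' : 0 < Real.cos φ' := Real.cos_pos_of_mem_Ioo ⟨by linarith, hφ'lt⟩
    have hsγ : 0 ≤ Real.sin γ := Real.sin_nonneg_of_nonneg_of_le_pi (by linarith) hγ2
    have hkey : Real.cos φ' * Real.cos φ - Real.sin φ' * Real.sin φ = Real.sin γ := by
      rw [← Real.cos_add]
      have : φ' + φ = γ - Real.pi/2 := by simp only [hφ'def]; ring
      rw [this, Real.cos_sub_pi_div_two]
    have hm := mVal_nonneg ⟨hγ1, hγ2⟩ φ
    have hs := sVal_pos hα hε hm
    have hsle : sVal α ε (mVal γ φ) ≤ α := sVal_le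
    set s := sVal α ε (mVal γ φ) with hsdef
    match x with
    | some ψ =>
      refine ⟨some ψ, Set.mem_range_self ψ, ?_⟩
      obtain ⟨hg1, hg2⟩ := gPt_pos (γ := γ) (α := α) (ε := ε) ⟨hγ1, hγ2⟩ hα hε ψ
      show α • (Ffun γ α ε (some ψ)) - Ffun γ α ε (some ψ) ∈ coneC γ φ
      apply mem_coneC_of_nonneg hsφ hcφ.le hsφ' hcφ'.le
      · simp only [Ffun, Prod.fst_sub, Prod.smul_fst, smul_eq_mul]
        nlinarith
      · simp only [Ffun, Prod.snd_sub, Prod.smul_snd, smul_eq_mul]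
        nlinarith
    | none =>
      refine ⟨some φ, Set.mem_range_self φ, ?_⟩
      show α • (Ffun γ α ε none) - Ffun γ α ε (some φ) ∈ coneC γ φ
      by_cases hcase : γ - Real.pi/2 ≤ 2 * φ
      · -- case A : φ' ≤ φ, mVal = tan φ
        have hφ'φ : φ' ≤ φ := by simp only [hφ'def]; linarith
        have hmid : γ/2 - Real.pi/4 ≤ φ := by linarith
        have ht1 : Real.tan φ' ≤ Real.tan φ := tan_mono_aux hφ'0 hφ'φ hφlt
        have ht2 : Real.tan (γ/2 - Real.pi/4) ≤ Real.tan φ :=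
          tan_mono_aux (by linarith) hmid hφlt
        have hmval : mVal γ φ = Real.tan φ := by
          rw [mVal, ← hφ'def, max_eq_left ht1, max_eq_right ht2]
        have hdiff : α • (Ffun γ α ε none) - Ffun γ α ε (some φ) =
            (α - s, -((α - s) * Real.tan φ)) := by
          show α • ((1:ℝ), (1:ℝ)) - gPt γ α ε φ = _
          rw [gPt, if_pos hcase, ← hsdef, hmval, Prod.ext_iff]
          constructor <;> simp [smul_eq_mul] <;> ring
        rw [hdiff]
        constructor
        · show 0 ≤ Real.cos φ' * (α - s) + Real.sin φ' * (-((α - s) * Real.tan φ))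
          have heq : Real.cos φ' * (α - s) + Real.sin φ' * (-((α - s) * Real.tan φ)) =
              (α - s) * Real.sin γ / Real.cos φ := by
            rw [Real.tan_eq_sin_div_cos, ← hkey]
            field_simp
            ring
          rw [heq]
          exact div_nonneg (mul_nonneg (by linarith) hsγ) hcφ.le
        · show 0 ≤ Real.sin φ * (α - s) + Real.cos φ * (-((α - s) * Real.tan φ))
          have heq : Real.sin φ * (α - s) + Real.cos φ * (-((α - s) * Real.tan φ)) = 0 := by
            rw [Real.tan_eq_sin_div_cos]
            field_simp
            ring
          rw [heq]
      · -- case B : φ < φ', mVal = tan φ'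
        push_neg at hcase
        have hφφ' : φ ≤ φ' := by simp only [hφ'def]; linarith
        have hmid : γ/2 - Real.pi/4 ≤ φ' := by simp only [hφ'def]; linarith
        have ht1 : Real.tan φ ≤ Real.tan φ' := tan_mono_aux hφ0 hφφ' hφ'lt
        have ht2 : Real.tan (γ/2 - Real.pi/4) ≤ Real.tan φ' :=
          tan_mono_aux (by linarith) hmid hφ'lt
        have hmval : mVal γ φ = Real.tan φ' := by
          rw [mVal, ← hφ'def, max_eq_right ht1, max_eq_right ht2]
        have hdiff : α • (Ffun γ α ε none) - Ffun γ α ε (some φ) =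
            (-((α - s) * Real.tan φ'), α - s) := by
          show α • ((1:ℝ), (1:ℝ)) - gPt γ α ε φ = _
          rw [gPt, if_neg (by linarith), ← hsdef, hmval, Prod.ext_iff]
          constructor <;> simp [smul_eq_mul] <;> ring
        rw [hdiff]
        constructor
        · show 0 ≤ Real.cos φ' * (-((α - s) * Real.tan φ')) + Real.sin φ' * (α - s)
          have heq : Real.cos φ' * (-((α - s) * Real.tan φ')) + Real.sin φ' * (α - s) = 0 := by
            rw [Real.tan_eq_sin_div_cos]
            field_simp
            ring
          rw [heq]
        · show 0 ≤ Real.sin φ * (-((α - s) * Real.tan φ')) + Real.cos φ * (α - s)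
          have heq : Real.sin φ * (-((α - s) * Real.tan φ')) + Real.cos φ * (α - s) =
              (α - s) * Real.sin γ / Real.cos φ' := by
            rw [Real.tan_eq_sin_div_cos, ← hkey]
            field_simp
            ring
          rw [heq]
          exact div_nonneg (mul_nonneg (by linarith) hsγ) hcφ'.le
  · intro hIA
    obtain ⟨x', hx', hA, hB⟩ := hIA none
    obtain ⟨ψ, rfl⟩ := hx'
    have hbig := gPt_big (γ := γ) (α := α) (ε := ε) ⟨hγ1, hγ2⟩ hα hε ψ
    simp only [Ffun] at hA hB
    rcases hbig with h | h <;> linarith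
end
end

section
/- For every γ ∈ (π/2, π] and every α ≥ 1, there exists an instance (X, f) of a biobjective maximization problem (with X finite, so f(X) − ℝ²_≥ is closed and f(X) is bounded) such that the set of γ-supported solutions is not an α-approximation with respect to the componentwise order. (Concretely, one may take three solutions with f(x₁) = (1, α + 2 + α/tan(γ/2 − π/4)), f(x₂) = (α + 2 + α/tan(γ/2 − π/4), 1), and f(x₃) = (α + 1, α + 1); then x₃ is not γ-supported and is not α-approximated by x₁ or x₂.) -/
open Real Set Pointwise

noncomputable section

/-- Algebraic core: the two cone inequalities. -/
lemma stmt19_key (α sβ cβ sφ cφ sφ' cφ' K : ℝ) (hα : 1 ≤ α) (hs : 0 < sβ)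
    (hsc : sβ ≤ cβ) (hK : K * sβ = sβ + α * cβ)
    (h1 : sβ ≤ sφ) (h2 : cφ ≤ cβ) (h3 : sφ' ≤ sβ) (h4 : cβ ≤ cφ') :
    0 ≤ cφ' * K + sφ' * (-α) ∧ 0 ≤ sφ * K + cφ * (-α) := by
  have hcβ : 0 < cβ := lt_of_lt_of_le hs hsc
  have hα0 : (0:ℝ) ≤ α := by linarith
  have hKpos : 0 < K := by nlinarith
  have hdiff : 0 ≤ (cβ - sβ) * (cβ + sβ) := by
    apply mul_nonneg <;> linarith
  constructor
  · have h5 : cβ * K ≤ cφ' * K := by nlinarith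
    have h6 : α * sβ * sβ ≤ cβ * K * sβ := by nlinarith
    have h7 : α * sβ ≤ cβ * K := by nlinarith
    have h8 : α * sφ' ≤ α * sβ := mul_le_mul_of_nonneg_left h3 hα0
    linarith
  · have h5 : sβ * K ≤ sφ * K := by nlinarith
    have h6 : α * cβ * sβ ≤ sβ * K * sβ := by nlinarith
    have h7 : α * cβ ≤ sβ * K := by nlinarith
    have h8 : α * cφ ≤ α * cβ := mul_le_mul_of_nonneg_left h2 hα0
    linarith

/-- for maximization, for every `γ ∈ (π/2, π]` and `α ≥ 1` there is a
(finite) instance where the set of `γ`-supported solutions is not an `α`-approximation. -/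
theorem stmt_19 (γ α : ℝ) (hγ : γ ∈ Set.Ioc (Real.pi/2) Real.pi) (hα : 1 ≤ α) :
    ∃ (X : Type) (_ : Fintype X) (f : X → ℝ × ℝ), Nonempty X ∧
      (∀ x, 0 < (f x).1 ∧ 0 < (f x).2) ∧
      ¬ IsApproxMax α f {x : X | GammaSupportedMax γ f x} := by
  obtain ⟨hγ1, hγ2⟩ := hγ
  have hπ := Real.pi_pos
  obtain ⟨β, hβdef⟩ : ∃ b : ℝ, b = γ/2 - Real.pi/4 := ⟨_, rfl⟩
  have hβpos : 0 < β := by rw [hβdef]; linarith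
  have hβle : β ≤ Real.pi/4 := by rw [hβdef]; linarith
  have h2β : γ - Real.pi/2 = 2*β := by rw [hβdef]; ring
  have hβlt : β < Real.pi := by linarith
  have hs : 0 < Real.sin β := Real.sin_pos_of_pos_of_lt_pi hβpos hβlt
  have hsc : Real.sin β ≤ Real.cos β := by
    have h1 : Real.sin β ≤ Real.sin (Real.pi/4) :=
      Real.strictMonoOn_sin.monotoneOn ⟨by linarith, by linarith⟩
        ⟨by linarith, by linarith⟩ hβle
    have h2 : Real.cos (Real.pi/4) ≤ Real.cos β :=
      Real.cos_le_cos_of_nonneg_of_le_pi (le_of_lt hβpos) (by linarith) hβle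
    rw [Real.sin_pi_div_four] at h1
    rw [Real.cos_pi_div_four] at h2
    linarith
  obtain ⟨K, hKdef⟩ : ∃ k : ℝ, k = 1 + α * Real.cos β / Real.sin β := ⟨_, rfl⟩
  have hK : K * Real.sin β = Real.sin β + α * Real.cos β := by
    rw [hKdef]; field_simp
  have hKpos : 0 < K := by nlinarith
  obtain ⟨M, hMdef⟩ : ∃ m : ℝ, m = α + 1 + K := ⟨_, rfl⟩
  obtain ⟨f, hfdef⟩ : ∃ g : Fin 3 → ℝ × ℝ, g = ![(1, M), (M, 1), (α+1, α+1)] := ⟨_, rfl⟩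
  have hf0 : f 0 = (1, M) := by rw [hfdef]; rfl
  have hf1 : f 1 = (M, 1) := by rw [hfdef]; rfl
  have hf2 : f 2 = (α+1, α+1) := by rw [hfdef]; rfl
  refine ⟨Fin 3, inferInstance, f, ⟨0⟩, ?_, ?_⟩
  · intro x
    fin_cases x <;> refine ⟨?_, ?_⟩ <;> simp [hf0, hf1, hf2, hMdef] <;> nlinarith
  · -- index 2 is not γ-supported
    have hnsup : ¬ GammaSupportedMax γ f 2 := by
      rintro ⟨φ, ⟨⟨hφ0, hφ2⟩, -⟩, hopt⟩
      rw [h2β] at hφ2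
      apply hopt
      have hmon : ∀ a b : ℝ, 0 ≤ a → a ≤ b → b ≤ 2*β →
          Real.sin a ≤ Real.sin b ∧ Real.cos b ≤ Real.cos a := by
        intro a b ha hab hb
        constructor
        · exact Real.strictMonoOn_sin.monotoneOn
            ⟨by linarith, by linarith⟩ ⟨by linarith, by linarith⟩ hab
        · exact Real.cos_le_cos_of_nonneg_of_le_pi ha (by linarith) hab
      by_cases hcase : β ≤ φ
      · -- use index 1
        refine ⟨1, ?_, ?_⟩
        · rw [hf1, hf2]
          intro h
          have := congrArg Prod.snd h
          simp at this
          linarith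
        · obtain ⟨hsφ, hcφ⟩ := hmon β φ (le_of_lt hβpos) hcase hφ2
          obtain ⟨hsφ', hcφ'⟩ := hmon (γ - Real.pi/2 - φ) β (by linarith) (by linarith) (by linarith)
          obtain ⟨k1, k2⟩ := stmt19_key α (Real.sin β) (Real.cos β) (Real.sin φ)
            (Real.cos φ) (Real.sin (γ - Real.pi/2 - φ)) (Real.cos (γ - Real.pi/2 - φ)) K
            hα hs hsc hK hsφ hcφ hsφ' hcφ'
          rw [leC, hf1, hf2]
          have hsub : ((M, (1:ℝ)) : ℝ × ℝ) - (α+1, α+1) = (K, -α) := by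
            rw [hMdef, Prod.mk_sub_mk]
            simp only [Prod.mk.injEq]
            constructor <;> ring
          rw [hsub]
          exact ⟨k1, k2⟩
      · -- use index 0
        push_neg at hcase
        refine ⟨0, ?_, ?_⟩
        · rw [hf0, hf2]
          intro h
          have := congrArg Prod.fst h
          simp at this
          linarith
        · obtain ⟨hsφ', hcφ'⟩ := hmon β (γ - Real.pi/2 - φ) (le_of_lt hβpos) (by linarith) (by linarith)
          obtain ⟨hsφ, hcφ⟩ := hmon φ β hφ0 (le_of_lt hcase) (by linarith)
          obtain ⟨k1, k2⟩ := stmt19_key α (Real.sin β) (Real.cos β)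
            (Real.sin (γ - Real.pi/2 - φ)) (Real.cos (γ - Real.pi/2 - φ))
            (Real.sin φ) (Real.cos φ) K
            hα hs hsc hK hsφ' hcφ' hsφ hcφ
          rw [leC, hf0, hf2]
          have hsub : (((1:ℝ), M) : ℝ × ℝ) - (α+1, α+1) = (-α, K) := by
            rw [hMdef, Prod.mk_sub_mk]
            simp only [Prod.mk.injEq]
            constructor <;> ring
          rw [hsub]
          refine ⟨?_, ?_⟩
          · show 0 ≤ Real.cos (γ - Real.pi/2 - φ) * (-α) + Real.sin (γ - Real.pi/2 - φ) * K
            linarith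
          · show 0 ≤ Real.sin φ * (-α) + Real.cos φ * K
            linarith
    intro happ
    obtain ⟨x', hx'S, h1, h2⟩ := happ 2
    have hx3 : x' = 0 ∨ x' = 1 ∨ x' = 2 := by omega
    rcases hx3 with h | h | h <;> subst h
    · rw [hf0, hf2] at h1
      simp at h1
      linarith
    · rw [hf1, hf2] at h2
      simp at h2
      linarith
    · exact hnsup hx'S
end
end
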